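/- arXiv:2508.00681 — 2 statements merged into one kernel-verified Lean document; each statement's English description precedes it below -/
import Mathlib

section
/- If G is a finite group and H is an elementary abelian 2-group, then β(G × H) = β(G) · β(H) = β(G), where β(K) = i(K)/c(K). -/
noncomputable def numInv (G : Type*) [Group G] : ℕ := Nat.card {x : G // x ^ 2 = 1}

noncomputable def numCyc (G : Type*) [Group G] : ℕ := Nat.card {H : Subgroup G // IsCyclic H}

noncomputable def beta (G : Type*) [Group G] : ℚ := (numInv G : ℚ) / (numCyc G : ℚ)

open Subgroup

lemma isCyclic_zpowers' {G : Type*} [Group G] (g : G) : IsCyclic (zpowers g) := by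
  refine ⟨⟨⟨g, mem_zpowers g⟩, ?_⟩⟩
  rintro ⟨x, k, rfl⟩
  exact ⟨k, Subtype.ext (by simp)⟩

lemma exists_zpowers_eq {G : Type*} [Group G] (A : Subgroup G) (hA : IsCyclic A) :
    ∃ g : G, zpowers g = A := by
  obtain ⟨⟨g, hg⟩, hgen⟩ := hA.exists_generator
  refine ⟨g, le_antisymm (by simpa using zpowers_le.2 hg) ?_⟩
  intro x hx
  obtain ⟨k, hk⟩ := hgen ⟨x, hx⟩
  exact ⟨k, congrArg Subtype.val hk⟩

lemma sq_eq_one_inj {H : Type*} [Group H] {h h' : H} (hh : h ^ 2 = 1)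
    (e : zpowers h = zpowers h') : h = h' := by
  have hpow : ∀ m : ℤ, h ^ (2 * m) = 1 := by
    intro m
    rw [zpow_mul, show (2 : ℤ) = ((2 : ℕ) : ℤ) from rfl, zpow_natCast, hh, one_zpow]
  obtain ⟨k, hk0⟩ : h' ∈ zpowers h := e ▸ mem_zpowers h'
  have hk : h ^ k = h' := hk0
  rcases Int.even_or_odd k with ⟨m, rfl⟩ | ⟨m, rfl⟩
  · have h1 : h' = 1 := by
      rw [← hk, show m + m = (2 : ℤ) * m by ring]; exact hpow m
    subst h1
    have : h ∈ zpowers (1 : H) := e.symm ▸ mem_zpowers h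
    simpa [zpowers_one_eq_bot] using this
  · rw [← hk, zpow_add, hpow m, one_mul, zpow_one]

lemma key {G H : Type*} [Group G] [Group H] [Finite G] {g g' : G} {h : H}
    (hh : h ^ 2 = 1) (e : zpowers g = zpowers g') :
    zpowers ((g, h) : G × H) = zpowers ((g', h) : G × H) := by
  -- it suffices to show one inclusion, by symmetry
  have main : ∀ a b : G, zpowers a = zpowers b →
      ((b, h) : G × H) ∈ zpowers ((a, h) : G × H) := by
    intro a b eab
    have hb : b ∈ Submonoid.powers a := by
      rw [mem_powers_iff_mem_zpowers]; exact eab ▸ mem_zpowers b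
    obtain ⟨k, hk1⟩ := hb
    have hk : a ^ k = b := hk1
    have key2 : ∀ k : ℕ, Odd k → a ^ k = b → ((b, h) : G × H) ∈ zpowers ((a, h) : G × H) := by
      intro k hko hk
      refine ⟨(k : ℤ), ?_⟩
      show ((a, h) : G × H) ^ (k : ℤ) = (b, h)
      have hr : ((a, h) : G × H) ^ (k : ℕ) = (a ^ k, h ^ k) := rfl
      rw [zpow_natCast, hr, hk, Prod.mk.injEq]
      refine ⟨rfl, ?_⟩
      obtain ⟨m, rfl⟩ := hko
      rw [pow_add, pow_mul, hh, one_pow, one_mul, pow_one]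
    rcases Nat.even_or_odd k with hke | hko
    · -- k even; then orderOf a must be odd (else contradiction), use k + orderOf a
      rcases Nat.even_or_odd (orderOf a) with hne | hno
      · exfalso
        have ha : a ∈ Submonoid.powers b := by
          rw [mem_powers_iff_mem_zpowers]; exact eab ▸ mem_zpowers a
        obtain ⟨l, hl0⟩ := ha
        have hl : a ^ (k * l) = a := by rw [pow_mul, hk]; exact hl0
        have hkl : Even (k * l) := hke.mul_right l
        rcases Nat.eq_zero_or_pos (k * l) with h0 | hpos
        · rw [h0, pow_zero] at hl
          rw [← hl] at hne
          simp at hne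
        · have h3 : a ^ (k * l - 1 + 1) = a := by rw [Nat.sub_add_cancel hpos]; exact hl
          rw [pow_succ] at h3
          have h4 : a ^ (k * l - 1) = 1 := by
            have : a ^ (k * l - 1) * a = 1 * a := by rw [one_mul]; exact h3
            exact mul_right_cancel this
          have hdvd : orderOf a ∣ k * l - 1 := orderOf_dvd_of_pow_eq_one h4
          obtain ⟨m2, hm2⟩ := hne.two_dvd.trans hdvd
          obtain ⟨m3, hm3⟩ := hkl
          omega
      · exact key2 (k + orderOf a) (by
            rcases hke with ⟨m, rfl⟩
            rcases hno with ⟨m', hm'⟩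
            exact ⟨m + m', by omega⟩)
          (by rw [pow_add, pow_orderOf_eq_one, mul_one, hk])
    · exact key2 k hko hk
  exact le_antisymm (zpowers_le.2 (main g' g e.symm)) (zpowers_le.2 (main g g' e))

theorem stmt_13 (G H : Type*) [Group G] [Group H] [Finite G] [Finite H]
    (hH : ∀ x : H, x ^ 2 = 1) :
    beta (G × H) = beta G * beta H ∧ beta (G × H) = beta G := by
  classical
  have hInvProd : numInv (G × H) = numInv G * Nat.card H := by
    rw [numInv, numInv, ← Nat.card_prod]
    refine Nat.card_congr ⟨fun x => (⟨x.1.1, congrArg Prod.fst x.2⟩, x.1.2),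
      fun p => ⟨(p.1.1, p.2), Prod.ext p.1.2 (hH _)⟩, fun x => rfl, fun p => rfl⟩
  have hInvH : numInv H = Nat.card H := Nat.card_congr (Equiv.subtypeUnivEquiv hH)
  have hCycH : numCyc H = Nat.card H := by
    refine (Nat.card_congr (Equiv.ofBijective
      (fun h : H => (⟨zpowers h, isCyclic_zpowers' h⟩ : {B : Subgroup H // IsCyclic B}))
      ⟨?_, ?_⟩)).symm.symm ▸ rfl
    · intro h h' hhh
      exact sq_eq_one_inj (hH h) (congrArg Subtype.val hhh)
    · rintro ⟨B, hB⟩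
      obtain ⟨h, hh⟩ := exists_zpowers_eq B hB
      exact ⟨h, Subtype.ext hh⟩
  have hCycProd : numCyc (G × H) = numCyc G * Nat.card H := by
    rw [numCyc, numCyc, ← Nat.card_prod]
    refine (Nat.card_congr (Equiv.ofBijective
      (fun p : {A : Subgroup G // IsCyclic A} × H =>
        (⟨zpowers (((exists_zpowers_eq p.1.1 p.1.2).choose, p.2) : G × H),
          isCyclic_zpowers' _⟩ : {C : Subgroup (G × H) // IsCyclic C}))
      ⟨?_, ?_⟩)).symm
    · rintro ⟨A, h⟩ ⟨A', h'⟩ hpp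
      have hz : zpowers (((exists_zpowers_eq A.1 A.2).choose, h) : G × H)
          = zpowers (((exists_zpowers_eq A'.1 A'.2).choose, h') : G × H) :=
        congrArg Subtype.val hpp
      have h1 : zpowers (exists_zpowers_eq A.1 A.2).choose
          = zpowers (exists_zpowers_eq A'.1 A'.2).choose := by
        have := congrArg (Subgroup.map (MonoidHom.fst G H)) hz
        rwa [MonoidHom.map_zpowers, MonoidHom.map_zpowers] at this
      have h2 : zpowers h = zpowers h' := by
        have := congrArg (Subgroup.map (MonoidHom.snd G H)) hz
        rwa [MonoidHom.map_zpowers, MonoidHom.map_zpowers] at this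
      have hA : A = A' := Subtype.ext
        (((exists_zpowers_eq A.1 A.2).choose_spec).symm.trans
          (h1.trans (exists_zpowers_eq A'.1 A'.2).choose_spec))
      have hhh : h = h' := sq_eq_one_inj (hH h) h2
      rw [Prod.mk.injEq]; exact ⟨hA, hhh⟩
    · rintro ⟨C, hC⟩
      obtain ⟨⟨g, h⟩, hg⟩ := exists_zpowers_eq C hC
      refine ⟨(⟨zpowers g, isCyclic_zpowers' g⟩, h), Subtype.ext ?_⟩
      have := key (hH h)
        ((exists_zpowers_eq (zpowers g) (isCyclic_zpowers' g)).choose_spec :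
          zpowers (exists_zpowers_eq (zpowers g) (isCyclic_zpowers' g)).choose = zpowers g).symm
      exact (this.symm.trans hg)
  have hHcard : ((Nat.card H : ℚ)) ≠ 0 := by
    have : 0 < Nat.card H := Nat.card_pos
    exact_mod_cast this.ne'
  have hmain : beta (G × H) = beta G := by
    rw [beta, beta, hInvProd, hCycProd]
    push_cast
    rw [mul_div_mul_right _ _ hHcard]
  have hbH : beta H = 1 := by
    rw [beta, hInvH, hCycH, div_self hHcard]
  exact ⟨by rw [hbH, mul_one]; exact hmain, hmain⟩
end

section
/- For pairwise distinct odd primes p_1, ..., p_n, the direct product of the dihedral groups D_{2p_1}, ..., D_{2p_n} satisfies β(∏ D_{2p_j}) = ∏ β(D_{2p_j}) = ∏ (p_j + 1)/(p_j + 2). -/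
open Subgroup Finset DihedralGroup

section SumFormula

variable {G : Type*} [Group G]

lemma aux_isCyclic_zpowers (g : G) : IsCyclic (zpowers g) := by
  refine ⟨⟨⟨g, mem_zpowers g⟩, fun x => ?_⟩⟩
  obtain ⟨k, hk⟩ := x.2
  exact ⟨k, Subtype.ext (by simpa using hk)⟩

lemma aux_zpowers_eq_iff [Finite G] {H : Subgroup G} (g : G) :
    zpowers g = H ↔ g ∈ H ∧ orderOf g = Nat.card H := by
  constructor
  · rintro rfl
    exact ⟨mem_zpowers g, (Nat.card_zpowers g).symm⟩
  · rintro ⟨hg, hord⟩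
    exact Subgroup.eq_of_le_of_card_ge (zpowers_le.mpr hg) (by rw [Nat.card_zpowers, hord])

open scoped Classical in
lemma aux_fiber_card [Fintype G] {H : Subgroup G} (hH : IsCyclic H) :
    (univ.filter fun g : G => zpowers g = H).card = Nat.totient (Nat.card H) := by
  have key : (univ.filter fun g : G => zpowers g = H).card
      = (univ.filter fun h : H => orderOf h = Fintype.card H).card := by
    apply Finset.card_bij (fun g hg => (⟨g, by
        simp only [mem_filter, mem_univ, true_and] at hg
        exact ((aux_zpowers_eq_iff g).mp hg).1⟩ : H))
    · intro g hg
      simp only [mem_filter, mem_univ, true_and] at hg ⊢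
      have h1 := ((aux_zpowers_eq_iff g).mp hg).2
      have h2 := orderOf_injective H.subtype H.subtype_injective
        (⟨g, ((aux_zpowers_eq_iff g).mp hg).1⟩ : H)
      simp only [Subgroup.coe_subtype] at h2
      rw [← h2, h1, Nat.card_eq_fintype_card]
    · intro a ha b hb hab
      exact congrArg Subtype.val hab
    · intro h hh
      simp only [mem_filter, mem_univ, true_and] at hh
      refine ⟨(h : G), ?_, rfl⟩
      simp only [mem_filter, mem_univ, true_and]
      rw [aux_zpowers_eq_iff]
      have h2 := orderOf_injective H.subtype H.subtype_injective h
      simp only [Subgroup.coe_subtype] at h2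
      exact ⟨h.2, by rw [h2, hh, Nat.card_eq_fintype_card]⟩
  rw [key, Nat.card_eq_fintype_card, IsCyclic.card_orderOf_eq_totient dvd_rfl]

open scoped Classical in
lemma numCyc_eq_sum (G : Type*) [Group G] [Fintype G] :
    (numCyc G : ℚ) = ∑ g : G, 1 / (Nat.totient (orderOf g) : ℚ) := by
  have hFin : Fintype (Subgroup G) := Fintype.ofFinite _
  have h1 : ∀ g : G, (1 : ℚ) / (Nat.totient (orderOf g) : ℚ)
      = (fun H : Subgroup G => 1 / (Nat.totient (Nat.card H) : ℚ)) (zpowers g) := by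
    intro g; simp only [Nat.card_zpowers]
  simp_rw [h1]
  rw [← Finset.sum_fiberwise_of_maps_to'
    (t := univ.filter fun H : Subgroup G => IsCyclic H)
    (g := fun g : G => zpowers g)
    (fun g _ => by simp [aux_isCyclic_zpowers g])
    (fun H : Subgroup G => 1 / (Nat.totient (Nat.card H) : ℚ))]
  have h2 : ∀ H ∈ univ.filter fun H : Subgroup G => IsCyclic H,
      (∑ _g ∈ univ.filter fun g : G => zpowers g = H,
        (1 / (Nat.totient (Nat.card H) : ℚ))) = 1 := by
    intro H hH
    simp only [mem_filter, mem_univ, true_and] at hH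
    rw [Finset.sum_const, aux_fiber_card hH, nsmul_eq_mul]
    have hpos : 0 < Nat.totient (Nat.card H) :=
      Nat.totient_pos.mpr Nat.card_pos
    field_simp
  rw [Finset.sum_congr rfl h2, Finset.sum_const, nsmul_eq_mul, mul_one]
  rw [numCyc, Nat.card_eq_fintype_card, Fintype.card_subtype]

end SumFormula

lemma aux_orderOf_pi {ι : Type*} [Fintype ι] {G : ι → Type*} [∀ i, Group (G i)]
    (x : ∀ i, G i) : orderOf x = univ.lcm fun i => orderOf (x i) := by
  apply Nat.dvd_antisymm
  · apply orderOf_dvd_of_pow_eq_one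
    funext i
    simp only [Pi.pow_apply, Pi.one_apply]
    exact orderOf_dvd_iff_pow_eq_one.mp (Finset.dvd_lcm (mem_univ i))
  · apply Finset.lcm_dvd
    intro i _
    rw [orderOf_dvd_iff_pow_eq_one]
    exact congrFun (pow_orderOf_eq_one x) i

lemma aux_totient_lcm_two {L : ℕ} (hL : L ≠ 0) : Nat.totient (Nat.lcm 2 L) = Nat.totient L := by
  clear hL
  rcases Nat.even_or_odd L with he | ho
  · have : Nat.lcm 2 L = L :=
      Nat.dvd_antisymm (Nat.lcm_dvd he.two_dvd dvd_rfl) (Nat.dvd_lcm_right 2 L)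
    rw [this]
  · have hcop : Nat.Coprime 2 L := Nat.coprime_two_left.mpr ho
    rw [hcop.lcm_eq_mul, Nat.totient_mul hcop, Nat.totient_two, one_mul]

lemma aux_totient_lcm {n : ℕ} (p : Fin n → ℕ) (hp : ∀ j, (p j).Prime)
    (hodd : ∀ j, Odd (p j)) (hinj : Function.Injective p) (a : Fin n → ℕ)
    (ha : ∀ j, a j = 1 ∨ a j = 2 ∨ a j = p j) (s : Finset (Fin n)) :
    Nat.totient (s.lcm a) = ∏ j ∈ s, Nat.totient (a j) := by
  induction s using Finset.induction_on with
  | empty => simp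
  | @insert j s hj ih =>
    have hdvd : s.lcm a ∣ 2 * ∏ i ∈ s, p i := by
      apply Finset.lcm_dvd
      intro i hi
      rcases ha i with h | h | h
      · rw [h]; exact one_dvd _
      · rw [h]; exact Dvd.dvd.mul_right dvd_rfl _
      · rw [h]; exact Dvd.dvd.mul_left (Finset.dvd_prod_of_mem p hi) 2
    have hne : s.lcm a ≠ 0 := by
      intro h0
      rw [h0, zero_dvd_iff] at hdvd
      exact Nat.mul_ne_zero two_ne_zero
        (Finset.prod_ne_zero_iff.mpr fun i _ => (hp i).ne_zero) hdvd
    rw [Finset.lcm_insert, Finset.prod_insert hj, ← ih, lcm_eq_nat_lcm]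
    rcases ha j with h | h | h
    · rw [h, Nat.lcm_one_left, Nat.totient_one, one_mul]
    · rw [h, aux_totient_lcm_two hne, Nat.totient_two, one_mul]
    · rw [h]
      have hcop : Nat.Coprime (p j) (s.lcm a) := by
        rw [(hp j).coprime_iff_not_dvd]
        intro hd
        have hdd := hd.trans hdvd
        rcases ((Nat.Prime.prime (hp j)).dvd_mul).mp hdd with h2 | hprod
        · have h2' : p j = 2 := (Nat.prime_dvd_prime_iff_eq (hp j) Nat.prime_two).mp h2
          exact absurd (h2' ▸ hodd j) (by decide)
        · obtain ⟨i, hi, hpi⟩ :=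
            ((Nat.Prime.prime (hp j)).dvd_finset_prod_iff p).mp hprod
          have : p j = p i := (Nat.prime_dvd_prime_iff_eq (hp j) (hp i)).mp hpi
          exact hj (hinj this ▸ hi)
      rw [hcop.lcm_eq_mul, Nat.totient_mul hcop]

def dihEquiv (m : ℕ) : (ZMod m) ⊕ (ZMod m) ≃ DihedralGroup m where
  toFun i := match i with
    | Sum.inl j => r j
    | Sum.inr j => sr j
  invFun i := match i with
    | r j => Sum.inl j
    | sr j => Sum.inr j
  left_inv := by rintro (x | x) <;> rfl
  right_inv := by rintro (x | x) <;> rfl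

lemma aux_gcd_one {m : ℕ} (hm : m.Prime) {i : ZMod m} (hi : i ≠ 0) :
    haveI : NeZero m := ⟨hm.ne_zero⟩
    Nat.gcd m i.val = 1 := by
  haveI : NeZero m := ⟨hm.ne_zero⟩
  have hpos : 0 < i.val := by
    rcases Nat.eq_zero_or_pos i.val with h0 | h
    · exact absurd ((ZMod.val_eq_zero i).mp h0) hi
    · exact h
  exact (hm.coprime_iff_not_dvd).mpr (Nat.not_dvd_of_pos_of_lt hpos (ZMod.val_lt i))

lemma aux_dih_order {m : ℕ} (hm : m.Prime) (g : DihedralGroup m) :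
    orderOf g = 1 ∨ orderOf g = 2 ∨ orderOf g = m := by
  haveI : NeZero m := ⟨hm.ne_zero⟩
  cases g with
  | r i =>
    rw [orderOf_r]
    rcases eq_or_ne i 0 with h0 | hne
    · left; rw [h0, ZMod.val_zero, Nat.gcd_zero_right, Nat.div_self hm.pos]
    · right; right; rw [aux_gcd_one hm hne, Nat.div_one]
  | sr i =>
    right; left; exact orderOf_sr i

lemma aux_sum_dih {m : ℕ} [NeZero m] (hm : m.Prime) :
    ∑ g : DihedralGroup m, 1 / (Nat.totient (orderOf g) : ℚ) = (m : ℚ) + 2 := by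
  classical
  rw [← Equiv.sum_comp (dihEquiv m) (fun g => 1 / (Nat.totient (orderOf g) : ℚ)),
    Fintype.sum_sum_type]
  have hsr : ∀ i : ZMod m, (1 : ℚ) / (Nat.totient (orderOf (sr i)) : ℚ) = 1 := by
    intro i; rw [orderOf_sr, Nat.totient_two]; norm_num
  have hr : ∀ i : ZMod m, i ≠ 0 → (1 : ℚ) / (Nat.totient (orderOf (r i)) : ℚ)
      = 1 / ((m : ℚ) - 1) := by
    intro i hi
    rw [orderOf_r, aux_gcd_one hm hi, Nat.div_one, Nat.totient_prime hm,
      Nat.cast_sub hm.one_lt.le, Nat.cast_one]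
  have h2 : ∑ i : ZMod m, (1 : ℚ) / (Nat.totient (orderOf ((dihEquiv m) (Sum.inl i))) : ℚ)
      = 1 + ((m : ℚ) - 1) * (1 / ((m : ℚ) - 1)) := by
    show ∑ i : ZMod m, (1 : ℚ) / (Nat.totient (orderOf (r i)) : ℚ) = _
    rw [← Finset.add_sum_erase univ _ (mem_univ (0 : ZMod m))]
    congr 1
    · rw [show (r (0 : ZMod m)) = 1 from rfl, orderOf_one, Nat.totient_one]; norm_num
    · rw [Finset.sum_congr rfl (fun i hi => hr i (Finset.ne_of_mem_erase hi)),
        Finset.sum_const, Finset.card_erase_of_mem (mem_univ 0), Finset.card_univ, ZMod.card,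
        nsmul_eq_mul, Nat.cast_sub hm.one_lt.le, Nat.cast_one]
  have h3 : ∑ i : ZMod m, (1 : ℚ) / (Nat.totient (orderOf ((dihEquiv m) (Sum.inr i))) : ℚ)
      = (m : ℚ) := by
    show ∑ i : ZMod m, (1 : ℚ) / (Nat.totient (orderOf (sr i)) : ℚ) = _
    rw [Finset.sum_congr rfl (fun i _ => hsr i), Finset.sum_const, Finset.card_univ, ZMod.card,
      nsmul_eq_mul, mul_one]
  rw [h2, h3]
  have hm1 : (m : ℚ) - 1 ≠ 0 := by
    have : (2 : ℚ) ≤ (m : ℚ) := by exact_mod_cast hm.two_le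
    linarith
  field_simp
  ring

lemma aux_numInv_dih {m : ℕ} (hm : m.Prime) (hodd : Odd m) :
    numInv (DihedralGroup m) = m + 1 := by
  haveI : NeZero m := ⟨hm.ne_zero⟩
  haveI : Fact m.Prime := ⟨hm⟩
  have hf : Function.Bijective (fun o : Option (ZMod m) =>
      (⟨o.elim 1 sr, by
        cases o with
        | none => simp
        | some i => show (sr i)^2 = 1; rw [sq, sr_mul_sr, sub_self, one_def]⟩ :
        {x : DihedralGroup m // x ^ 2 = 1})) := by
    constructor
    · rintro (_ | a) (_ | b) hab <;> simp only [Subtype.mk.injEq, Option.elim] at hab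
      · rfl
      · exact absurd hab (by rw [one_def]; intro h; cases h)
      · exact absurd hab.symm (by rw [one_def]; intro h; cases h)
      · simpa using hab
    · rintro ⟨g, hg⟩
      cases g with
      | r i =>
        have hii : i + i = 0 := by
          have h2 : r (i + i) = 1 := by rw [← r_mul_r, ← sq]; exact hg
          rw [one_def] at h2
          exact DihedralGroup.r.inj h2
        have hi : i = 0 := by
          have h2 : (2 : ZMod m) * i = 0 := by rw [two_mul]; exact hii
          have h2ne : (2 : ZMod m) ≠ 0 := by
            intro h
            have hdvd : m ∣ 2 := by
              have := (ZMod.natCast_eq_zero_iff 2 m).mp (by exact_mod_cast h)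
              exact this
            have : m = 2 := (Nat.prime_dvd_prime_iff_eq hm Nat.prime_two).mp hdvd
            exact absurd (this ▸ hodd) (by decide)
          rcases mul_eq_zero.mp h2 with h | h
          · exact absurd h h2ne
          · exact h
        exact ⟨none, Subtype.ext (show (1 : DihedralGroup m) = r i by rw [hi, ← one_def])⟩
      | sr i => exact ⟨some i, rfl⟩
  rw [numInv, ← Nat.card_congr (Equiv.ofBijective _ hf), Nat.card_eq_fintype_card,
    Fintype.card_option, ZMod.card]

lemma aux_numInv_pi {ι : Type*} [Fintype ι] (G : ι → Type*) [∀ i, Group (G i)] :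
    numInv (∀ i, G i) = ∏ i, numInv (G i) := by
  have e : {x : ∀ i, G i // x ^ 2 = 1} ≃ ∀ i, {y : G i // y ^ 2 = 1} :=
    (Equiv.subtypeEquivRight (fun x => by
      simp [funext_iff])).trans (Equiv.subtypePiEquivPi)
  calc numInv (∀ i, G i) = Nat.card (∀ i, {y : G i // y ^ 2 = 1}) := Nat.card_congr e
    _ = ∏ i, Nat.card {y : G i // y ^ 2 = 1} := Nat.card_pi
    _ = ∏ i, numInv (G i) := rfl

theorem stmt_15 (n : ℕ) (p : Fin n → ℕ) (hp : ∀ j, (p j).Prime) (hodd : ∀ j, Odd (p j))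
    (hinj : Function.Injective p) :
    beta (∀ j, DihedralGroup (p j)) = ∏ j, beta (DihedralGroup (p j)) ∧
    beta (∀ j, DihedralGroup (p j)) = ∏ j, ((p j : ℚ) + 1) / ((p j : ℚ) + 2) := by
  haveI : ∀ j, NeZero (p j) := fun j => ⟨(hp j).ne_zero⟩
  classical
  have hcycPi : (numCyc (∀ j, DihedralGroup (p j)) : ℚ) = ∏ j, ((p j : ℚ) + 2) := by
    rw [numCyc_eq_sum]
    have step : ∀ g : (∀ j, DihedralGroup (p j)),
        (1 : ℚ) / (Nat.totient (orderOf g) : ℚ)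
          = ∏ j, 1 / (Nat.totient (orderOf (g j)) : ℚ) := by
      intro g
      rw [aux_orderOf_pi,
        aux_totient_lcm p hp hodd hinj _ (fun j => aux_dih_order (hp j) (g j)) univ]
      push_cast
      simp only [one_div]
      rw [Finset.prod_inv_distrib]
    simp_rw [step]
    rw [show (univ : Finset (∀ j, DihedralGroup (p j)))
        = Fintype.piFinset (fun _ => univ) from (Fintype.piFinset_univ).symm,
      ← Finset.prod_univ_sum (fun _ => (univ : Finset (DihedralGroup (p _))))
        (fun j (y : DihedralGroup (p j)) => 1 / (Nat.totient (orderOf y) : ℚ))]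
    exact Finset.prod_congr rfl fun j _ => aux_sum_dih (hp j)
  have hcycj : ∀ j, (numCyc (DihedralGroup (p j)) : ℚ) = (p j : ℚ) + 2 :=
    fun j => (numCyc_eq_sum _).trans (aux_sum_dih (hp j))
  have hinvPi : (numInv (∀ j, DihedralGroup (p j)) : ℚ) = ∏ j, ((p j : ℚ) + 1) := by
    rw [aux_numInv_pi]
    rw [show (fun j => numInv (DihedralGroup (p j))) = fun j => p j + 1 from
      funext fun j => aux_numInv_dih (hp j) (hodd j)]
    push_cast
    rfl
  have hinvj : ∀ j, (numInv (DihedralGroup (p j)) : ℚ) = (p j : ℚ) + 1 := by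
    intro j
    rw [aux_numInv_dih (hp j) (hodd j)]
    push_cast
    rfl
  have hbetaPi : beta (∀ j, DihedralGroup (p j)) = ∏ j, ((p j : ℚ) + 1) / ((p j : ℚ) + 2) := by
    rw [beta, hcycPi, hinvPi, Finset.prod_div_distrib]
  have hbetaj : ∀ j, beta (DihedralGroup (p j)) = ((p j : ℚ) + 1) / ((p j : ℚ) + 2) := by
    intro j
    rw [beta, hcycj, hinvj]
  refine ⟨?_, hbetaPi⟩
  rw [hbetaPi]
  exact (Finset.prod_congr rfl fun j _ => (hbetaj j).symm)
end
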